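/- Let s₁,…,s_{ℓ+1} be exchangeable, almost surely pairwise distinct real random variables, and let α ∈ [0,1] with ℓ ≥ 1. Then α ≤ P(|{i : s_i ≥ s_{ℓ+1}}|/(ℓ+1) > 1 − α) ≤ α + 1/(ℓ+1); hence this probability tends to α as ℓ → ∞. -/

import Mathlib

open MeasureTheory Finset
open scoped ENNReal

noncomputable def Ncnt {n : ℕ} (j : Fin n) (v : Fin n → ℝ) : ℕ :=
  (univ.filter (fun i => v j ≤ v i)).card

lemma ncnt_comp {n : ℕ} (v : Fin n → ℝ) (σ : Equiv.Perm (Fin n)) (j : Fin n) :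
    Ncnt j (fun i => v (σ i)) = Ncnt (σ j) v := by
  unfold Ncnt
  apply Finset.card_bij' (fun i _ => σ i) (fun i _ => σ.symm i) <;> simp

lemma ncnt_measurable {n : ℕ} (j : Fin n) : Measurable (Ncnt j) := by
  unfold Ncnt
  simp_rw [Finset.card_filter]
  apply Finset.measurable_sum
  intro i _
  apply Measurable.ite _ measurable_const measurable_const
  exact measurableSet_le (measurable_pi_apply j) (measurable_pi_apply i)

lemma ncnt_inj {n : ℕ} (v : Fin n → ℝ) (hv : ∀ i j, i ≠ j → v i ≠ v j) :
    Function.Injective (fun j => Ncnt j v) := by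
  have key : ∀ a b : Fin n, v a < v b → Ncnt b v < Ncnt a v := by
    intro a b hab
    apply Finset.card_lt_card
    constructor
    · intro i hi
      simp only [mem_filter, mem_univ, true_and] at hi ⊢
      linarith
    · intro hsub
      have := hsub (by simp : a ∈ univ.filter (fun i => v a ≤ v i))
      simp at this
      linarith
  intro a b hab
  by_contra hne
  rcases lt_or_gt_of_ne (hv a b hne) with h | h
  · exact absurd hab (key a b h).ne'
  · exact absurd hab (key b a h).ne

lemma ncnt_mem {n : ℕ} (v : Fin (n+1) → ℝ) (j : Fin (n+1)) :
    Ncnt j v ∈ Icc 1 (n+1) := by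
  simp only [mem_Icc]
  refine ⟨Finset.card_pos.2 ⟨j, by simp⟩, ?_⟩
  simpa [Ncnt] using Finset.card_filter_le univ (fun i => v j ≤ v i)

lemma ncnt_image {n : ℕ} (v : Fin (n+1) → ℝ) (hv : ∀ i j, i ≠ j → v i ≠ v j) :
    univ.image (fun j => Ncnt j v) = Icc 1 (n+1) := by
  apply Finset.eq_of_subset_of_card_le
  · intro k hk
    simp only [mem_image] at hk
    obtain ⟨j, _, rfl⟩ := hk
    exact ncnt_mem v j
  · rw [Nat.card_Icc, Finset.card_image_of_injective _ (ncnt_inj v hv)]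
    simp

lemma count_filter_eq {n : ℕ} (v : Fin (n+1) → ℝ)
    (hv : ∀ i j, i ≠ j → v i ≠ v j) (P : ℕ → Prop) [DecidablePred P] :
    (univ.filter (fun j => P (Ncnt j v))).card = ((Icc 1 (n+1)).filter P).card := by
  rw [← ncnt_image v hv, Finset.filter_image,
    Finset.card_image_of_injective _ (ncnt_inj v hv)]

lemma m_card {n : ℕ} (α : ℝ) (h1 : α ≤ 1) :
    ((Icc 1 (n+1)).filter (fun k : ℕ => (1 - α : ℝ) < (k:ℝ)/((n:ℝ)+1))).card
      = (n+1) - ⌊(1-α)*((n:ℝ)+1)⌋₊ := by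
  have hpos : (0:ℝ) < (n:ℝ)+1 := by positivity
  have hc0 : (0:ℝ) ≤ (1-α)*((n:ℝ)+1) := by nlinarith
  have hcond : ∀ k : ℕ, ((1 - α : ℝ) < (k:ℝ)/((n:ℝ)+1)) ↔ ⌊(1-α)*((n:ℝ)+1)⌋₊ < k := by
    intro k
    rw [lt_div_iff₀ hpos, Nat.floor_lt hc0]
  have : (Icc 1 (n+1)).filter (fun k : ℕ => (1 - α : ℝ) < (k:ℝ)/((n:ℝ)+1))
      = Ioc ⌊(1-α)*((n:ℝ)+1)⌋₊ (n+1) := by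
    ext k
    simp only [mem_filter, mem_Icc, mem_Ioc, hcond]
    omega
  rw [this, Nat.card_Ioc]

lemma m_bounds {n : ℕ} (α : ℝ) (h0 : 0 ≤ α) (h1 : α ≤ 1) :
    α * ((n:ℝ)+1) ≤ (((Icc 1 (n+1)).filter (fun k : ℕ => (1 - α : ℝ) < (k:ℝ)/((n:ℝ)+1))).card : ℝ) ∧
    (((Icc 1 (n+1)).filter (fun k : ℕ => (1 - α : ℝ) < (k:ℝ)/((n:ℝ)+1))).card : ℝ)
      ≤ α * ((n:ℝ)+1) + 1 := by
  have hpos : (0:ℝ) < (n:ℝ)+1 := by positivity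
  have hc0 : (0:ℝ) ≤ (1-α)*((n:ℝ)+1) := by nlinarith
  have hfl : ⌊(1-α)*((n:ℝ)+1)⌋₊ ≤ n+1 := by
    have : (1-α)*((n:ℝ)+1) ≤ ((n:ℝ)+1) := by nlinarith
    calc ⌊(1-α)*((n:ℝ)+1)⌋₊ ≤ ⌊((n:ℝ)+1)⌋₊ := Nat.floor_le_floor this
      _ = n+1 := by
        rw [show ((n:ℝ)+1) = ((n+1:ℕ):ℝ) by push_cast; ring, Nat.floor_natCast]
  have hle : (⌊(1-α)*((n:ℝ)+1)⌋₊ : ℝ) ≤ (1-α)*((n:ℝ)+1) := Nat.floor_le hc0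
  have hlt : (1-α)*((n:ℝ)+1) < ⌊(1-α)*((n:ℝ)+1)⌋₊ + 1 := Nat.lt_floor_add_one _
  rw [m_card α h1, Nat.cast_sub hfl]
  push_cast
  constructor <;> nlinarith

theorem conformal_two_sided_validity {Ω : Type*} [MeasurableSpace Ω]
    (μ : Measure Ω) [IsProbabilityMeasure μ]
    (s : (ℓ : ℕ) → Fin (ℓ + 1) → Ω → ℝ)
    (hmeas : ∀ ℓ, ∀ i, Measurable (s ℓ i))
    (hexch : ∀ ℓ, ∀ σ : Equiv.Perm (Fin (ℓ + 1)),
      Measure.map (fun ω => fun i => s ℓ (σ i) ω) μ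
        = Measure.map (fun ω => fun i => s ℓ i ω) μ)
    (hdist : ∀ ℓ, ∀ᵐ ω ∂μ, ∀ i j : Fin (ℓ + 1), i ≠ j → s ℓ i ω ≠ s ℓ j ω)
    (α : ℝ) (hα : α ∈ Set.Icc (0:ℝ) 1) :
    (∀ ℓ : ℕ, 1 ≤ ℓ →
      ENNReal.ofReal α ≤
        μ {ω | (((Finset.univ.filter
            (fun i : Fin (ℓ + 1) => s ℓ (Fin.last ℓ) ω ≤ s ℓ i ω)).card : ℝ) / (ℓ + 1)
          > 1 - α)} ∧
      μ {ω | (((Finset.univ.filter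
            (fun i : Fin (ℓ + 1) => s ℓ (Fin.last ℓ) ω ≤ s ℓ i ω)).card : ℝ) / (ℓ + 1)
          > 1 - α)} ≤ ENNReal.ofReal (α + 1 / (ℓ + 1))) ∧
    Filter.Tendsto (fun ℓ : ℕ =>
        (μ {ω | (((Finset.univ.filter
            (fun i : Fin (ℓ + 1) => s ℓ (Fin.last ℓ) ω ≤ s ℓ i ω)).card : ℝ) / (ℓ + 1)
          > 1 - α)}).toReal)
      Filter.atTop (nhds α) := by
  classical
  obtain ⟨h0, h1⟩ := hα
  -- notation
  set P : ℕ → ℕ → Prop := fun ℓ k => (1 - α : ℝ) < (k:ℝ)/((ℓ:ℝ)+1) with hP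
  set m : ℕ → ℕ := fun ℓ => ((Icc 1 (ℓ+1)).filter (P ℓ)).card with hm
  set E : ℕ → Set Ω := fun ℓ => {ω | (((Finset.univ.filter
      (fun i : Fin (ℓ + 1) => s ℓ (Fin.last ℓ) ω ≤ s ℓ i ω)).card : ℝ) / (ℓ + 1)
      > 1 - α)} with hE
  -- the exact value of the probability
  have key : ∀ ℓ : ℕ, μ (E ℓ) = ENNReal.ofReal ((m ℓ : ℝ) / ((ℓ:ℝ)+1)) := by
    intro ℓ
    set S : Ω → (Fin (ℓ+1) → ℝ) := fun ω i => s ℓ i ω with hS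
    have hSm : Measurable S := measurable_pi_lambda _ (hmeas ℓ)
    set A : Fin (ℓ+1) → Set Ω := fun j => {ω | P ℓ (Ncnt j (S ω))} with hA
    have hAm : ∀ j, MeasurableSet (A j) := by
      intro j
      exact (ncnt_measurable j).comp hSm (MeasurableSet.of_discrete (s := {k | P ℓ k}))
    have hEA : E ℓ = A (Fin.last ℓ) := rfl
    -- exchangeability: all A j have the same measure
    have hAeq : ∀ j, μ (A j) = μ (A (Fin.last ℓ)) := by
      intro j
      set σ : Equiv.Perm (Fin (ℓ+1)) := Equiv.swap j (Fin.last ℓ) with hσ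
      have hperm := hexch ℓ σ
      have hmB : MeasurableSet {v : Fin (ℓ+1) → ℝ | P ℓ (Ncnt (Fin.last ℓ) v)} :=
        (ncnt_measurable (Fin.last ℓ)) (MeasurableSet.of_discrete (s := {k | P ℓ k}))
      have hσm : Measurable (fun ω => fun i => s ℓ (σ i) ω) :=
        measurable_pi_lambda _ (fun i => hmeas ℓ (σ i))
      have lhs := Measure.map_apply (μ := μ) hσm hmB
      have rhs := Measure.map_apply (μ := μ) hSm hmB
      rw [hperm] at lhs
      rw [lhs] at rhs
      have : (fun ω => fun i => s ℓ (σ i) ω) ⁻¹' {v | P ℓ (Ncnt (Fin.last ℓ) v)} = A j := by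
        ext ω
        simp only [Set.mem_preimage, Set.mem_setOf_eq, hA]
        rw [show (fun i => s ℓ (σ i) ω) = (fun i => (S ω) (σ i)) from rfl, ncnt_comp,
          Equiv.swap_apply_right]
      rw [this] at rhs
      exact rhs
    -- sum over j
    have hsum : ∑ j : Fin (ℓ+1), μ (A j) = (m ℓ : ℝ≥0∞) := by
      have h1' : ∀ j : Fin (ℓ+1), μ (A j) = ∫⁻ ω, (A j).indicator (1 : Ω → ℝ≥0∞) ω ∂μ := by
        intro j; rw [lintegral_indicator_one (hAm j)]
      calc ∑ j : Fin (ℓ+1), μ (A j)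
          = ∑ j : Fin (ℓ+1), ∫⁻ ω, (A j).indicator (1 : Ω → ℝ≥0∞) ω ∂μ := by
            exact Finset.sum_congr rfl (fun j _ => h1' j)
        _ = ∫⁻ ω, ∑ j : Fin (ℓ+1), (A j).indicator (1 : Ω → ℝ≥0∞) ω ∂μ := by
            rw [lintegral_finset_sum]
            intro j _
            exact (measurable_one.indicator (hAm j))
        _ = ∫⁻ _, (m ℓ : ℝ≥0∞) ∂μ := by
            apply lintegral_congr_ae
            filter_upwards [hdist ℓ] with ω hω
            have hsum2 : ∑ j : Fin (ℓ+1), (A j).indicator (1 : Ω → ℝ≥0∞) ω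
                = ((univ.filter (fun j => P ℓ (Ncnt j (S ω)))).card : ℝ≥0∞) := by
              rw [Finset.card_filter, Nat.cast_sum]
              apply Finset.sum_congr rfl
              intro j _
              simp [Set.indicator_apply, hA, apply_ite (Nat.cast : ℕ → ℝ≥0∞)]
            rw [hsum2]
            have hc := count_filter_eq (S ω) hω (P ℓ)
            simp only [hm]
            exact_mod_cast hc
        _ = (m ℓ : ℝ≥0∞) := by simp [lintegral_const]
    have hconst : ∑ j : Fin (ℓ+1), μ (A j) = (ℓ+1 : ℝ≥0∞) * μ (A (Fin.last ℓ)) := by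
      rw [Finset.sum_congr rfl (fun j _ => hAeq j), Finset.sum_const]
      simp [mul_comm]
    rw [hconst] at hsum
    have hne : ((ℓ:ℝ≥0∞)+1) ≠ 0 := by simp
    have hnt : ((ℓ:ℝ≥0∞)+1) ≠ ⊤ := by simp
    have hdiv : μ (A (Fin.last ℓ)) = (m ℓ : ℝ≥0∞) / ((ℓ:ℝ≥0∞)+1) := by
      rw [ENNReal.eq_div_iff hne hnt]
      exact_mod_cast hsum
    rw [hEA, hdiv]
    rw [ENNReal.ofReal_div_of_pos (by positivity)]
    congr 1
    · exact (ENNReal.ofReal_natCast _).symm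
    · rw [← ENNReal.ofReal_natCast ℓ, ← ENNReal.ofReal_one, ← ENNReal.ofReal_add
        (by positivity) zero_le_one]
  -- real-valued bounds
  have hmb : ∀ ℓ : ℕ, α ≤ (m ℓ : ℝ) / ((ℓ:ℝ)+1) ∧ (m ℓ : ℝ) / ((ℓ:ℝ)+1) ≤ α + 1/((ℓ:ℝ)+1) := by
    intro ℓ
    have hpos : (0:ℝ) < (ℓ:ℝ)+1 := by positivity
    obtain ⟨hlo, hhi⟩ := m_bounds (n := ℓ) α h0 h1
    constructor
    · rw [le_div_iff₀ hpos]; exact hlo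
    · rw [div_le_iff₀ hpos]
      have : (α + 1/((ℓ:ℝ)+1)) * ((ℓ:ℝ)+1) = α * ((ℓ:ℝ)+1) + 1 := by
        field_simp
      rw [this]; exact hhi
  have htoReal : ∀ ℓ : ℕ, (μ (E ℓ)).toReal = (m ℓ : ℝ) / ((ℓ:ℝ)+1) := by
    intro ℓ
    rw [key ℓ, ENNReal.toReal_ofReal (by positivity)]
  refine ⟨?_, ?_⟩
  · intro ℓ _
    have hb := hmb ℓ
    constructor
    · rw [key ℓ]
      exact ENNReal.ofReal_le_ofReal hb.1
    · rw [key ℓ]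
      exact ENNReal.ofReal_le_ofReal hb.2
  · apply tendsto_of_tendsto_of_tendsto_of_le_of_le
      (g := fun _ : ℕ => α) (h := fun ℓ : ℕ => α + 1/((ℓ:ℝ)+1))
    · exact tendsto_const_nhds
    · have : Filter.Tendsto (fun ℓ : ℕ => 1/((ℓ:ℝ)+1)) Filter.atTop (nhds 0) :=
        tendsto_one_div_add_atTop_nhds_zero_nat
      simpa using Filter.Tendsto.const_add α this
    · intro ℓ
      show α ≤ (μ (E ℓ)).toReal
      rw [htoReal ℓ]
      exact (hmb ℓ).1
    · intro ℓ
      show (μ (E ℓ)).toReal ≤ α + 1/((ℓ:ℝ)+1)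
      rw [htoReal ℓ]
      exact (hmb ℓ).2
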